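/- Let k ≥ 2 be an integer and define p_n(z) by p_0 = 1, p_1 = z, p_2 = z² − 2k, p_{n+1}(z) = z·p_n(z) − (2k−1)·p_{n−1}(z) for n ≥ 2. Then the derivatives satisfy p_{n+1}'(2k) > p_n'(2k) for all n ≥ 1. -/

import Mathlib

/-- The polynomials `p_n` over `ℝ`: `p_0 = 1`, `p_1 = z`, `p_2 = z² - 2k`,
`p_{n+1} = z p_n - (2k-1) p_{n-1}` for `n ≥ 2`. -/
noncomputable def pR (k : ℕ) : ℕ → Polynomial ℝ
  | 0 => 1
  | 1 => Polynomial.X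
  | 2 => Polynomial.X ^ 2 - Polynomial.C ((2 * k : ℕ) : ℝ)
  | (n + 3) => Polynomial.X * pR k (n + 2) - Polynomial.C ((2 * k - 1 : ℕ) : ℝ) * pR k (n + 1)

lemma pR_eval (k : ℕ) (hk : 2 ≤ k) : ∀ n : ℕ,
    (pR k (n+1)).eval ((2*k:ℕ):ℝ) = ((2*k:ℕ):ℝ) * ((2*k-1:ℕ):ℝ)^n := by
  have hM : ((2*k-1:ℕ):ℝ) = ((2*k:ℕ):ℝ) - 1 := by
    push_cast [show (1:ℕ) ≤ 2*k by omega]; ring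
  intro n
  induction n using Nat.strong_induction_on with
  | _ n ih =>
    match n with
    | 0 => simp [pR]
    | 1 =>
      simp only [pR, Polynomial.eval_sub, Polynomial.eval_pow, Polynomial.eval_X,
        Polynomial.eval_C, pow_one, hM]
      ring
    | (n+2) =>
      have h1 := ih n (by omega)
      have h2 := ih (n+1) (by omega)
      simp only [pR, Polynomial.eval_sub, Polynomial.eval_mul, Polynomial.eval_X,
        Polynomial.eval_C, h1, h2, hM]
      ring

lemma pR_deriv_rec (k n : ℕ) :
    Polynomial.derivative (pR k (n+3)) =
      pR k (n+2) + Polynomial.X * Polynomial.derivative (pR k (n+2))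
        - Polynomial.C ((2*k-1:ℕ):ℝ) * Polynomial.derivative (pR k (n+1)) := by
  show Polynomial.derivative (Polynomial.X * pR k (n + 2)
      - Polynomial.C ((2 * k - 1 : ℕ) : ℝ) * pR k (n + 1)) = _
  simp [Polynomial.derivative_mul]

/-- The derivatives satisfy `p_{n+1}'(2k) > p_n'(2k)` for all `n ≥ 1`. -/
theorem stmt8 (k : ℕ) (hk : 2 ≤ k) (n : ℕ) (hn : 1 ≤ n) :
    (Polynomial.derivative (pR k n)).eval ((2 * k : ℕ) : ℝ) <
      (Polynomial.derivative (pR k (n + 1))).eval ((2 * k : ℕ) : ℝ) := by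
  set K : ℝ := ((2*k:ℕ):ℝ) with hK
  have hK4 : (4:ℝ) ≤ K := by
    rw [hK]; exact_mod_cast (by omega : (4:ℕ) ≤ 2*k)
  have hM : ((2*k-1:ℕ):ℝ) = K - 1 := by
    rw [hK]; push_cast [show (1:ℕ) ≤ 2*k by omega]; ring
  set d : ℕ → ℝ := fun m => (Polynomial.derivative (pR k m)).eval K with hd
  have key : ∀ m : ℕ, d (m+1) < d (m+2) := by
    intro m
    induction m with
    | zero =>
      have h1 : d 1 = 1 := by simp [hd, pR]
      have h2 : d 2 = 2 * K := by
        simp [hd, pR, Polynomial.derivative_sub, Polynomial.derivative_X_pow]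
        norm_num
      rw [h1, h2]; nlinarith
    | succ m ih =>
      have hrec : d (m+3) = (pR k (m+2)).eval K + K * d (m+2) - (K-1) * d (m+1) := by
        simp only [hd, pR_deriv_rec, Polynomial.eval_sub, Polynomial.eval_add,
          Polynomial.eval_mul, Polynomial.eval_X, Polynomial.eval_C, hM]
      have he : (pR k (m+2)).eval K = K * (K-1)^(m+1) := by
        rw [pR_eval k hk (m+1), hM]
      have hKm : (0:ℝ) < K - 1 := by linarith
      have hpos : 0 < K * (K-1)^(m+1) := by positivity
      have : d (m+3) - d (m+2) = K * (K-1)^(m+1) + (K-1) * (d (m+2) - d (m+1)) := by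
        rw [hrec, he]; ring
      nlinarith [this, ih]
  obtain ⟨m, rfl⟩ : ∃ m, n = m + 1 := ⟨n - 1, by omega⟩
  exact key m
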